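/- If the Fourier transform operator F satisfies the Hausdorff–Young inequality ‖F[f]‖_{L^{p/(p-1)}} ≤ C‖f‖_{L^p} for p ∈ (1,2], and ψ is positive continuous with (1,2] ⊂ supp ψ, then F is bounded from G(ψ) into G(ψ₁) where ψ₁(q) = ψ(q/(q-1)): ‖F[f]‖_{G(ψ₁)} ≤ C‖f‖_{G(ψ)}. -/

import Mathlib

open MeasureTheory Set

/-- If the Fourier transform `F` satisfies the Hausdorff–Young inequality
`‖F f‖_{L^{p/(p-1)}} ≤ C ‖f‖_{L^p}` for `p ∈ (1,2]`, then `F` is bounded from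
`G(ψ)` into `G(ψ₁)` with `ψ₁(q) = ψ(q/(q-1))`. -/
theorem fourier_GNorm_bounded (F : (ℝ → ℂ) → (ℝ → ℂ)) (C : ℝ) (hC : 0 < C)
    (ψ : ℝ → ℝ) (hψ : ∀ p ∈ Set.Ioc (1 : ℝ) 2, 0 < ψ p)
    (hHY : ∀ p ∈ Set.Ioc (1 : ℝ) 2, ∀ f : ℝ → ℂ,
      eLpNorm (F f) (ENNReal.ofReal (p / (p - 1))) volume ≤
        ENNReal.ofReal C * eLpNorm f (ENNReal.ofReal p) volume) :
    ∀ f : ℝ → ℂ,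
      (⨆ q : Set.Ici (2 : ℝ),
          eLpNorm (F f) (ENNReal.ofReal (q : ℝ)) volume /
            ENNReal.ofReal (ψ ((q : ℝ) / ((q : ℝ) - 1)))) ≤
        ENNReal.ofReal C *
          ⨆ p : Set.Ioc (1 : ℝ) 2,
            eLpNorm f (ENNReal.ofReal (p : ℝ)) volume / ENNReal.ofReal (ψ p) := by
  intro f
  apply iSup_le
  rintro ⟨q, hq⟩
  simp only [Set.mem_Ici] at hq
  have hq1 : (0 : ℝ) < q - 1 := by linarith
  set p := q / (q - 1) with hp
  have hpmem : p ∈ Set.Ioc (1 : ℝ) 2 := by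
    constructor
    · rw [hp, lt_div_iff₀ hq1]; linarith
    · rw [hp, div_le_iff₀ hq1]; linarith
  have hpq : ENNReal.ofReal (p / (p - 1)) = ENNReal.ofReal q := by
    congr 1
    rw [hp]
    field_simp
    ring
  have key := hHY p hpmem f
  rw [hpq] at key
  calc eLpNorm (F f) (ENNReal.ofReal q) volume / ENNReal.ofReal (ψ p)
      ≤ (ENNReal.ofReal C * eLpNorm f (ENNReal.ofReal p) volume) / ENNReal.ofReal (ψ p) :=
        ENNReal.div_le_div_right key _
    _ = ENNReal.ofReal C * (eLpNorm f (ENNReal.ofReal p) volume / ENNReal.ofReal (ψ p)) := by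
        rw [mul_div_assoc]
    _ ≤ ENNReal.ofReal C *
          ⨆ p : Set.Ioc (1 : ℝ) 2,
            eLpNorm f (ENNReal.ofReal (p : ℝ)) volume / ENNReal.ofReal (ψ p) := by
        gcongr
        exact le_iSup (fun p : Set.Ioc (1 : ℝ) 2 =>
          eLpNorm f (ENNReal.ofReal (p : ℝ)) volume / ENNReal.ofReal (ψ p)) ⟨p, hpmem⟩
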